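/- Let R > 0 and let Π₁, Π₂ : [0,∞) → ℝ be measurable. Assume there exist a function ψ̃ : (0,∞) → (0,∞) with ψ̃(T)/log T → 0 as T → ∞ and a constant c > 0 such that for every T > R and every m ∈ {0,1,2}: (1) |∫_a^b (log(y−R+1))^m · Π₂(y) dy| ≤ c·ψ̃(T)^m for all a, b with R < a, b < T; (2) ∫_T^∞ Π₂(y) dy → 0 as T → ∞; (3) |Π₂(x)| ≤ c for all x ≥ R; and (4) Π₁ is Lebesgue integrable on [0,R]. Then ∫∫_{{(x,y) : 0 ≤ x < R ≤ y}} |φ^{(R,T)}(x) − φ^{(R,T)}(y)|² · Π₁(x)·Π₂(y) dx dy → 0 as T → ∞. -/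

import Mathlib

open MeasureTheory Filter

/-- The cutoff function `φ^{(R,T)}`: equal to `1` on `(-∞, R]`, to
`1 - log(x-R+1)/log(T-R+1)` on `[R, T]`, and to `0` on `[T, ∞)`. -/
noncomputable def phi (R T x : ℝ) : ℝ :=
  if x ≤ R then 1
  else if x ≤ T then 1 - Real.log (x - R + 1) / Real.log (T - R + 1)
  else 0

theorem stmt_7 (R : ℝ) (hR : 0 < R) (Pi₁ Pi₂ : ℝ → ℝ)
    (hmeas₁ : Measurable Pi₁) (hmeas₂ : Measurable Pi₂)
    (ψ : ℝ → ℝ) (hψpos : ∀ T : ℝ, 0 < T → 0 < ψ T)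
    (hψ : Tendsto (fun T : ℝ => ψ T / Real.log T) atTop (nhds 0))
    (c : ℝ) (hc : 0 < c)
    (h1 : ∀ T : ℝ, R < T → ∀ m : ℕ, m ≤ 2 → ∀ a b : ℝ,
      R < a → a < T → R < b → b < T →
      |∫ y in a..b, (Real.log (y - R + 1)) ^ m * Pi₂ y| ≤ c * ψ T ^ m)
    (h2 : Tendsto (fun T : ℝ => ∫ y in Set.Ioi T, Pi₂ y) atTop (nhds 0))
    (h3 : ∀ x : ℝ, R ≤ x → |Pi₂ x| ≤ c)
    (h4 : IntegrableOn Pi₁ (Set.Icc 0 R)) :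
    Tendsto (fun T : ℝ =>
        ∫ p in {p : ℝ × ℝ | 0 ≤ p.1 ∧ p.1 < R ∧ R ≤ p.2},
          |phi R T p.1 - phi R T p.2| ^ 2 * (Pi₁ p.1 * Pi₂ p.2))
      atTop (nhds 0) := by
  set A : ℝ := |∫ x in Set.Ico 0 R, Pi₁ x| with hAdef
  have hA0 : 0 ≤ A := abs_nonneg _
  set g : ℝ → ℝ := fun T =>
    ((ψ T / Real.log (T - R + 1)) ^ 2 * c + |∫ y in Set.Ioi T, Pi₂ y|) * A with hgdef
  -- measurability of phi
  have hphim : ∀ T : ℝ, Measurable (phi R T) := by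
    intro T
    unfold phi
    refine Measurable.ite (measurableSet_le measurable_id measurable_const) measurable_const ?_
    exact Measurable.ite (measurableSet_le measurable_id measurable_const)
      (measurable_const.sub ((Real.measurable_log.comp
        ((measurable_id.sub_const R).add_const 1)).div_const _)) measurable_const
  -- Main eventual bound
  have hmain : ∀ᶠ T in atTop, ‖∫ p in {p : ℝ × ℝ | 0 ≤ p.1 ∧ p.1 < R ∧ R ≤ p.2},
      |phi R T p.1 - phi R T p.2| ^ 2 * (Pi₁ p.1 * Pi₂ p.2)‖ ≤ g T := by
    filter_upwards [eventually_gt_atTop R] with T hT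
    have hL : 0 < Real.log (T - R + 1) := Real.log_pos (by linarith)
    set L : ℝ := Real.log (T - R + 1) with hLdef
    set h : ℝ → ℝ := fun y => (1 - phi R T y) ^ 2 * Pi₂ y with hhdef
    have hhm : Measurable h := by
      apply Measurable.mul _ hmeas₂
      exact ((measurable_const.sub (hphim T)).pow measurable_const)
    set J : ℝ := ∫ y in Set.Ici R, h y with hJdef
    -- bound on |J|
    have hJbound : |J| ≤ (ψ T / L) ^ 2 * c + |∫ y in Set.Ioi T, Pi₂ y| := by
      by_cases hJint : IntegrableOn h (Set.Ici R)
      · -- split the integral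
        have hdisj : Disjoint (Set.Icc R T) (Set.Ioi T) :=
          Set.disjoint_left.2 fun x hx hx' => absurd hx.2 (not_le.2 hx')
        have hsplit : J = (∫ y in Set.Icc R T, h y) + ∫ y in Set.Ioi T, h y := by
          rw [hJdef, ← Set.Icc_union_Ioi_eq_Ici hT.le,
            setIntegral_union hdisj measurableSet_Ioi
              (hJint.mono_set (by rw [← Set.Icc_union_Ioi_eq_Ici hT.le]; exact Set.subset_union_left))
              (hJint.mono_set (by rw [← Set.Icc_union_Ioi_eq_Ici hT.le]; exact Set.subset_union_right))]
        have hJ2 : (∫ y in Set.Ioi T, h y) = ∫ y in Set.Ioi T, Pi₂ y := by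
          refine setIntegral_congr_fun measurableSet_Ioi fun y hy => ?_
          have hy' : T < y := hy
          have : phi R T y = 0 := by
            unfold phi
            rw [if_neg (by linarith), if_neg (by linarith)]
          rw [hhdef]; simp [this]
        have hJ1 : (∫ y in Set.Icc R T, h y)
            = L⁻¹ ^ 2 * ∫ y in Set.Icc R T, Real.log (y - R + 1) ^ 2 * Pi₂ y := by
          rw [← integral_const_mul]
          refine setIntegral_congr_fun measurableSet_Icc fun y hy => ?_
          simp only [hhdef]
          rcases le_or_gt y R with hyR | hyR
          · have hyR' : y = R := le_antisymm hyR hy.1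
            have hphiy : phi R T y = 1 := by unfold phi; rw [if_pos hyR]
            rw [hphiy, hyR']
            simp
          · have hphiy : phi R T y = 1 - Real.log (y - R + 1) / L := by
              unfold phi
              rw [if_neg (not_le.2 hyR), if_pos hy.2]
            rw [hphiy]
            ring
        -- bound on the log integral over Icc R T via approximation from inside
        have hq_int : IntegrableOn (fun y => Real.log (y - R + 1) ^ 2 * Pi₂ y) (Set.Ioo R T) := by
          refine Integrable.mono' (g := fun _ => L ^ 2 * c)
            (integrableOn_const measure_Ioo_lt_top.ne)
            (((Real.measurable_log.comp
              ((measurable_id.sub_const R).add_const 1)).pow measurable_const).mul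
              hmeas₂).aestronglyMeasurable ?_
          rw [ae_restrict_iff' measurableSet_Ioo]
          refine Eventually.of_forall fun y hy => ?_
          rw [Real.norm_eq_abs, abs_mul, abs_pow]
          have hl : |Real.log (y - R + 1)| ≤ L := by
            rw [abs_of_nonneg (Real.log_nonneg (by linarith [hy.1]))]
            exact Real.log_le_log (by linarith [hy.1]) (by linarith [hy.2])
          have hp2 : |Pi₂ y| ≤ c := h3 y hy.1.le
          calc |Real.log (y - R + 1)| ^ 2 * |Pi₂ y| ≤ L ^ 2 * c := by
                gcongr
            _ = _ := rfl
        have hIoo : |∫ y in Set.Ioo R T, Real.log (y - R + 1) ^ 2 * Pi₂ y| ≤ c * ψ T ^ 2 := by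
          set d : ℝ := T - R with hddef
          have hd0 : 0 < d := by rw [hddef]; linarith
          set s : ℕ → Set ℝ := fun n => Set.Ioc (R + d / (n + 2)) (T - d / (n + 2)) with hsdef
          have hmono : Monotone s := by
            intro n m hnm
            have hden : d / (m + 2 : ℝ) ≤ d / (n + 2 : ℝ) := by
              apply div_le_div_of_nonneg_left hd0.le (by positivity)
              exact_mod_cast by omega
            exact Set.Ioc_subset_Ioc (by linarith) (by linarith)
          have hunion : (⋃ n, s n) = Set.Ioo R T := by
            ext x
            simp only [Set.mem_iUnion, hsdef, Set.mem_Ioc, Set.mem_Ioo]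
            constructor
            · rintro ⟨n, hx1, hx2⟩
              have hpos : (0:ℝ) < d / (n + 2) := by positivity
              constructor <;> linarith
            · rintro ⟨hx1, hx2⟩
              set m : ℝ := min (x - R) (T - x) with hmdef
              have hm0 : 0 < m := lt_min (by linarith) (by linarith)
              obtain ⟨n, hn⟩ := exists_nat_gt (d / m)
              have hn0 : (0:ℝ) ≤ (n:ℝ) := Nat.cast_nonneg n
              have hlt : d / (n + 2 : ℝ) < m := by
                rw [div_lt_iff₀ (by positivity)]
                have hd' : d < (n:ℝ) * m := (div_lt_iff₀ hm0).1 hn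
                nlinarith
              exact ⟨n, by linarith [lt_of_lt_of_le hlt (min_le_left (x - R) (T - x))],
                by linarith [lt_of_lt_of_le hlt (min_le_right (x - R) (T - x))]⟩
          have htend := tendsto_setIntegral_of_monotone (f := fun y => Real.log (y - R + 1) ^ 2 * Pi₂ y)
            (fun n => measurableSet_Ioc) hmono (by rw [hunion]; exact hq_int)
          rw [hunion] at htend
          refine le_of_tendsto htend.abs (Eventually.of_forall fun n => ?_)
          have hpos : (0:ℝ) < d / (n + 2) := by positivity
          have hhalf : d / (n + 2 : ℝ) ≤ d / 2 := by
            apply div_le_div_of_nonneg_left hd0.le (by norm_num)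
            exact_mod_cast by omega
          have hab : R + d / (n + 2 : ℝ) ≤ T - d / (n + 2 : ℝ) := by
            rw [hddef] at hhalf ⊢; linarith
          have : (∫ y in s n, Real.log (y - R + 1) ^ 2 * Pi₂ y)
              = ∫ y in (R + d / (n + 2 : ℝ))..(T - d / (n + 2 : ℝ)), Real.log (y - R + 1) ^ 2 * Pi₂ y := by
            rw [intervalIntegral.integral_of_le hab]
          rw [this]
          exact h1 T hT 2 le_rfl _ _ (by linarith) (by rw [hddef] at hhalf ⊢; linarith)
            (by rw [hddef] at hhalf ⊢; linarith) (by linarith)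
        have hIcc : |∫ y in Set.Icc R T, Real.log (y - R + 1) ^ 2 * Pi₂ y| ≤ c * ψ T ^ 2 := by
          rw [integral_Icc_eq_integral_Ioo]; exact hIoo
        calc |J| ≤ |∫ y in Set.Icc R T, h y| + |∫ y in Set.Ioi T, h y| := by
              rw [hsplit]; exact abs_add_le _ _
          _ ≤ (ψ T / L) ^ 2 * c + |∫ y in Set.Ioi T, Pi₂ y| := by
              rw [hJ1, hJ2]
              refine add_le_add ?_ le_rfl
              rw [abs_mul]
              calc |L⁻¹ ^ 2| * |∫ y in Set.Icc R T, Real.log (y - R + 1) ^ 2 * Pi₂ y|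
                  ≤ L⁻¹ ^ 2 * (c * ψ T ^ 2) := by
                    rw [abs_of_nonneg (by positivity : (0:ℝ) ≤ L⁻¹ ^ 2)]
                    gcongr
                _ = (ψ T / L) ^ 2 * c := by ring
      · rw [hJdef, integral_undef hJint]
        simp only [abs_zero]
        positivity
    -- Fubini step
    have hS : {p : ℝ × ℝ | 0 ≤ p.1 ∧ p.1 < R ∧ R ≤ p.2} = Set.Ico 0 R ×ˢ Set.Ici R := by
      ext ⟨x, y⟩
      simp [Set.mem_prod, and_assoc]
    have hrw : (∫ p in {p : ℝ × ℝ | 0 ≤ p.1 ∧ p.1 < R ∧ R ≤ p.2},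
          |phi R T p.1 - phi R T p.2| ^ 2 * (Pi₁ p.1 * Pi₂ p.2))
        = ∫ p, |phi R T p.1 - phi R T p.2| ^ 2 * (Pi₁ p.1 * Pi₂ p.2)
            ∂((volume.restrict (Set.Ico 0 R)).prod (volume.restrict (Set.Ici R))) := by
      rw [hS, Measure.prod_restrict, ← Measure.volume_eq_prod]
    by_cases hint : Integrable (fun p : ℝ × ℝ => |phi R T p.1 - phi R T p.2| ^ 2 * (Pi₁ p.1 * Pi₂ p.2))
        ((volume.restrict (Set.Ico 0 R)).prod (volume.restrict (Set.Ici R)))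
    · rw [hrw, MeasureTheory.integral_prod _ hint]
      have hinner : (∫ x in Set.Ico 0 R, ∫ y in Set.Ici R,
            |phi R T x - phi R T y| ^ 2 * (Pi₁ x * Pi₂ y))
          = ∫ x in Set.Ico 0 R, Pi₁ x * J := by
        refine setIntegral_congr_fun measurableSet_Ico fun x hx => ?_
        have hx1 : phi R T x = 1 := by unfold phi; rw [if_pos hx.2.le]
        have heq : ∀ y : ℝ, |phi R T x - phi R T y| ^ 2 * (Pi₁ x * Pi₂ y)
            = Pi₁ x * ((1 - phi R T y) ^ 2 * Pi₂ y) := by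
          intro y
          rw [hx1, sq_abs]
          ring
        simp_rw [heq]
        rw [integral_const_mul]
      show ‖∫ x in Set.Ico 0 R, ∫ y in Set.Ici R,
          |phi R T x - phi R T y| ^ 2 * (Pi₁ x * Pi₂ y)‖ ≤ g T
      rw [hinner]
      simp_rw [mul_comm (Pi₁ _) J]
      rw [integral_const_mul, Real.norm_eq_abs, abs_mul]
      calc |J| * |∫ x in Set.Ico 0 R, Pi₁ x|
          ≤ ((ψ T / L) ^ 2 * c + |∫ y in Set.Ioi T, Pi₂ y|) * A :=
            mul_le_mul_of_nonneg_right hJbound (abs_nonneg _)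
        _ = g T := rfl
    · rw [hrw, integral_undef hint]
      simp only [norm_zero, hgdef]
      positivity
  -- the bound tends to zero
  have hq : Tendsto (fun T => ψ T / Real.log (T - R + 1)) atTop (nhds 0) := by
    have hb : Tendsto (fun T => 2 * (ψ T / Real.log T)) atTop (nhds 0) := by
      simpa using hψ.const_mul 2
    refine squeeze_zero_norm' ?_ hb
    filter_upwards [eventually_ge_atTop 4, eventually_ge_atTop (2 * R), eventually_gt_atTop 1]
      with T h4T h2R h1T
    have hT0 : 0 < T := by linarith
    have hψT := hψpos T hT0
    have hlogT : 0 < Real.log T := Real.log_pos h1T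
    have hsq : Real.sqrt T ≤ T - R + 1 := by
      have h1' : Real.sqrt T ≤ T / 2 := by
        rw [show T / 2 = Real.sqrt ((T / 2) ^ 2) from (Real.sqrt_sq (by linarith)).symm]
        exact Real.sqrt_le_sqrt (by nlinarith)
      linarith
    have hLlb : Real.log T / 2 ≤ Real.log (T - R + 1) := by
      calc Real.log T / 2 = Real.log (Real.sqrt T) := (Real.log_sqrt hT0.le).symm
        _ ≤ Real.log (T - R + 1) := Real.log_le_log (Real.sqrt_pos.2 hT0) hsq
    have hL0 : 0 < Real.log (T - R + 1) := lt_of_lt_of_le (by positivity) hLlb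
    rw [Real.norm_eq_abs, abs_of_pos (div_pos hψT hL0)]
    calc ψ T / Real.log (T - R + 1) ≤ ψ T / (Real.log T / 2) := by
          apply div_le_div_of_nonneg_left hψT.le (by positivity) hLlb
      _ = 2 * (ψ T / Real.log T) := by ring
  have habs : Tendsto (fun T => |∫ y in Set.Ioi T, Pi₂ y|) atTop (nhds 0) := by
    simpa using h2.abs
  have hgl : Tendsto g atTop (nhds 0) := by
    have := (((hq.pow 2).mul_const c).add habs).mul_const A
    simpa using this
  exact squeeze_zero_norm' hmain hgl
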